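/- arXiv:1008.5227 — 4 statements merged into one kernel-verified Lean document; each statement's English description precedes it below -/
import Mathlib

section
/- The random dive MH proposal kernel satisfies the identity relating forward and backward densities: for x, y ≠ 0 with |y| < |x|, q(y→x)/q(x→y) = |y|/|x|, where q(x→y) = (1/2)g(y/x)/|x| for |y|<|x| and q(x→y) = (1/2)g(x/y)|x|/y² for |y|>|x|. Consequently the MH acceptance ratio π(y)q(y→x)/(π(x)q(x→y)) equals π(y)|y|/(π(x)|x|) = (π(y)/π(x))·|ε| with ε = y/x. -/
open MeasureTheory Set

/-- The random dive MH proposal kernel density. -/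
noncomputable def rdmhProposal (g : ℝ → ℝ) (x y : ℝ) : ℝ :=
  if |y| < |x| then (1 / 2) * g (y / x) * (1 / |x|)
  else if |x| < |y| then (1 / 2) * g (x / y) * (|x| / y ^ 2)
  else 0

theorem stmt_4 (g : ℝ → ℝ) (hg_pos : ∀ ε, 0 < |ε| → |ε| < 1 → 0 < g ε)
    (π : ℝ → ℝ) (hπ : ∀ z, 0 < π z)
    (x y : ℝ) (hx : x ≠ 0) (hy : y ≠ 0) (hxy : |y| < |x|) :
    rdmhProposal g y x / rdmhProposal g x y = |y| / |x| ∧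
    π y * rdmhProposal g y x / (π x * rdmhProposal g x y)
      = π y * |y| / (π x * |x|) ∧
    π y * |y| / (π x * |x|) = (π y / π x) * |y / x| := by
  have hxabs : (0:ℝ) < |x| := abs_pos.mpr hx
  have hyabs : (0:ℝ) < |y| := abs_pos.mpr hy
  have hεpos : 0 < |y / x| := by
    rw [abs_div]; exact div_pos hyabs hxabs
  have hεlt : |y / x| < 1 := by
    rw [abs_div]; exact (div_lt_one hxabs).mpr hxy
  have hgpos := hg_pos _ hεpos hεlt
  have h1 : rdmhProposal g x y = (1 / 2) * g (y / x) * (1 / |x|) := by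
    simp [rdmhProposal, hxy]
  have h2 : rdmhProposal g y x = (1 / 2) * g (y / x) * (|y| / x ^ 2) := by
    simp [rdmhProposal, not_lt.mpr hxy.le, hxy]
  have hx2 : (0:ℝ) < x ^ 2 := by positivity
  have hq1 : 0 < rdmhProposal g x y := by rw [h1]; positivity
  have key : rdmhProposal g y x / rdmhProposal g x y = |y| / |x| := by
    rw [h1, h2]
    rw [div_eq_div_iff (by positivity) hxabs.ne']
    have hxx : |x| * |x| = x ^ 2 := by rw [← abs_mul, sq, abs_mul_self]
    field_simp
    ring_nf
    rw [sq_abs]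
  refine ⟨key, ?_, ?_⟩
  · rw [mul_div_mul_comm, key, mul_div_mul_comm]
  · rw [abs_div, div_mul_div_comm]
end

section
/- The random dive MH kernel is reversible with respect to π on ℝ\{0}: for all nonzero x,y, π(x) q(x→y) α(x→y) = π(y) q(y→x) α(y→x), where α(x→y) = min{π(y)q(y→x)/(π(x)q(x→y)), 1}. -/
open MeasureTheory Set

/-- The Metropolis–Hastings acceptance probability for the RDMH proposal. -/
noncomputable def rdmhAccept (g π : ℝ → ℝ) (x y : ℝ) : ℝ :=
  min (π y * rdmhProposal g y x / (π x * rdmhProposal g x y)) 1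

lemma rdmhProposal_nonneg (g : ℝ → ℝ) (hg : ∀ ε, 0 ≤ g ε) (x y : ℝ) :
    0 ≤ rdmhProposal g x y := by
  unfold rdmhProposal
  split_ifs
  · exact mul_nonneg (mul_nonneg (by norm_num) (hg _)) (by positivity)
  · exact mul_nonneg (mul_nonneg (by norm_num) (hg _)) (by positivity)
  · exact le_refl 0

lemma mh_key (a b : ℝ) (ha : 0 ≤ a) (hb : 0 ≤ b) :
    a * min (b / a) 1 = b * min (a / b) 1 := by
  rcases ha.eq_or_lt with h | h
  · rcases hb.eq_or_lt with h' | h'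
    · rw [← h, ← h']
    · rw [← h, zero_mul, zero_div, min_eq_left zero_le_one, mul_zero]
  · rcases hb.eq_or_lt with h' | h'
    · rw [← h', zero_mul, zero_div, min_eq_left zero_le_one, mul_zero]
    · rw [mul_min_of_nonneg _ _ h.le, mul_min_of_nonneg _ _ h'.le,
        mul_div_cancel₀ _ h.ne', mul_div_cancel₀ _ h'.ne', mul_one, mul_one, min_comm]

theorem stmt_5 (g : ℝ → ℝ) (hg_nonneg : ∀ ε, 0 ≤ g ε)
    (hg_pos : ∀ ε, 0 < |ε| → |ε| < 1 → 0 < g ε)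
    (π : ℝ → ℝ) (hπ : ∀ z, z ≠ 0 → 0 < π z)
    (x y : ℝ) (hx : x ≠ 0) (hy : y ≠ 0) :
    π x * rdmhProposal g x y * rdmhAccept g π x y
      = π y * rdmhProposal g y x * rdmhAccept g π y x := by
  unfold rdmhAccept
  exact mh_key _ _
    (mul_nonneg (hπ x hx).le (rdmhProposal_nonneg g hg_nonneg x y))
    (mul_nonneg (hπ y hy).le (rdmhProposal_nonneg g hg_nonneg y x))
end

section
/- Drift bound at infinity: let p > 1, let g be a probability density on Y=(-1,1)\{0} with ∫_Y |ε|^{-s} g(ε)dε < ∞ for some s with 0 < s < 1/2 - 1/(2p). Then (1/2)∫_Y |ε|^{ps} g(ε)dε + (1/2)∫_Y |ε|^{p-ps-1} g(ε)dε + (1/2)∫_Y (1 - |ε|^{p-1}) g(ε)dε < 1. -/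
open MeasureTheory Set

theorem stmt_12 (p : ℝ) (hp : 1 < p) (s : ℝ) (hs0 : 0 < s)
    (hs1 : s < 1 / 2 - 1 / (2 * p))
    (g : ℝ → ℝ) (hg_meas : Measurable g) (hg_nonneg : ∀ ε, 0 ≤ g ε)
    (hg_supp : ∀ ε, ε ∉ Ioo (-1 : ℝ) 1 \ {0} → g ε = 0)
    (hg_int : IntegrableOn g (Ioo (-1 : ℝ) 1 \ {0}))
    (hg_one : ∫ ε in Ioo (-1 : ℝ) 1 \ {0}, g ε = 1)
    (hg_mom : IntegrableOn (fun ε => |ε| ^ (-s) * g ε) (Ioo (-1 : ℝ) 1 \ {0})) :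
    (1 / 2) * (∫ ε in Ioo (-1 : ℝ) 1 \ {0}, |ε| ^ (p * s) * g ε) +
      (1 / 2) * (∫ ε in Ioo (-1 : ℝ) 1 \ {0}, |ε| ^ (p - p * s - 1) * g ε) +
      (1 / 2) * (∫ ε in Ioo (-1 : ℝ) 1 \ {0}, (1 - |ε| ^ (p - 1)) * g ε) < 1 := by
  set S : Set ℝ := Ioo (-1 : ℝ) 1 \ {0} with hS
  have hS_meas : MeasurableSet S := measurableSet_Ioo.diff (measurableSet_singleton 0)
  have hp0 : (0 : ℝ) < p := by linarith
  have he1 : 0 < p * s := mul_pos hp0 hs0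
  have he23 : p * s < (p - 1) / 2 := by
    have h2p : (0:ℝ) < 2 * p := by linarith
    have := (mul_lt_mul_iff_right₀ hp0).mpr hs1
    have h : p * (1 / 2 - 1 / (2 * p)) = (p - 1) / 2 := by
      field_simp
    linarith [h ▸ this]
  have he2 : 0 < p - p * s - 1 := by linarith
  have he3 : 0 < p - 1 := by linarith
  -- properties of ε ∈ S
  have habs : ∀ ε ∈ S, 0 < |ε| ∧ |ε| < 1 := by
    intro ε hε
    obtain ⟨hIoo, hne⟩ := hε
    refine ⟨abs_pos.mpr ?_, abs_lt.mpr ⟨hIoo.1, hIoo.2⟩⟩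
    simpa using hne
  -- pointwise bounds
  have hpow_lt : ∀ ε ∈ S, ∀ e : ℝ, 0 < e → |ε| ^ e < 1 := by
    intro ε hε e he
    exact Real.rpow_lt_one (abs_nonneg ε) (habs ε hε).2 he
  have hpow_nonneg : ∀ (ε e : ℝ), 0 ≤ |ε| ^ e := fun ε e => Real.rpow_nonneg (abs_nonneg ε) e
  -- integrability of the pieces
  have hint_pow : ∀ e : ℝ, 0 < e → IntegrableOn (fun ε => |ε| ^ e * g ε) S := by
    intro e he
    refine Integrable.mono' hg_int ?_ ?_
    · exact (((Real.continuous_rpow_const he.le).comp continuous_abs).measurable.mul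
        hg_meas).aestronglyMeasurable
    · filter_upwards [ae_restrict_mem hS_meas] with ε hε
      rw [Real.norm_eq_abs, abs_of_nonneg (mul_nonneg (hpow_nonneg ε e) (hg_nonneg ε))]
      calc |ε| ^ e * g ε ≤ 1 * g ε := by
            exact mul_le_mul_of_nonneg_right (le_of_lt (hpow_lt ε hε e he)) (hg_nonneg ε)
        _ = g ε := one_mul _
  have hi1 := hint_pow (p * s) he1
  have hi2 := hint_pow (p - p * s - 1) he2
  have hi3 := hint_pow (p - 1) he3
  have hi3' : IntegrableOn (fun ε => (1 - |ε| ^ (p - 1)) * g ε) S := by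
    have : (fun ε => (1 - |ε| ^ (p - 1)) * g ε)
        = fun ε => g ε - |ε| ^ (p - 1) * g ε := by
      funext ε; ring
    rw [this]; exact hg_int.sub hi3
  -- the difference function
  set h : ℝ → ℝ := fun ε =>
    2 * g ε - (|ε| ^ (p * s) * g ε + |ε| ^ (p - p * s - 1) * g ε +
      (1 - |ε| ^ (p - 1)) * g ε) with hh
  have hh_int : IntegrableOn h S :=
    ((hg_int.const_mul 2).sub ((hi1.add hi2).add hi3'))
  -- algebraic key: on S, h ε = (1 - a^e1)(1 - a^e2) * g ε ≥ 0, > 0 when g ε > 0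
  have hfact : ∀ ε ∈ S, h ε = (1 - |ε| ^ (p * s)) * (1 - |ε| ^ (p - p * s - 1)) * g ε := by
    intro ε hε
    have hmul : |ε| ^ (p * s) * |ε| ^ (p - p * s - 1) = |ε| ^ (p - 1) := by
      rw [← Real.rpow_add (habs ε hε).1]; ring_nf
    show 2 * g ε - (|ε| ^ (p * s) * g ε + |ε| ^ (p - p * s - 1) * g ε +
      (1 - |ε| ^ (p - 1)) * g ε) = _
    rw [← hmul]; ring
  have hfact_pos : ∀ ε ∈ S,
      0 < (1 - |ε| ^ (p * s)) * (1 - |ε| ^ (p - p * s - 1)) := by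
    intro ε hε
    have h1 := hpow_lt ε hε (p * s) he1
    have h2 := hpow_lt ε hε (p - p * s - 1) he2
    nlinarith
  have hh_nonneg : 0 ≤ᵐ[volume.restrict S] h := by
    filter_upwards [ae_restrict_mem hS_meas] with ε hε
    rw [hfact ε hε]
    exact mul_nonneg (le_of_lt (hfact_pos ε hε)) (hg_nonneg ε)
  -- positivity of ∫ h
  have hg_pos : 0 < ∫ ε in S, g ε := by rw [hg_one]; norm_num
  have hg_sup : 0 < volume (Function.support g ∩ S) :=
    (setIntegral_pos_iff_support_of_nonneg_ae
      (by filter_upwards with ε using hg_nonneg ε) hg_int).mp hg_pos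
  have hsub : Function.support g ∩ S ⊆ Function.support h ∩ S := by
    rintro ε ⟨hgε, hεS⟩
    refine ⟨?_, hεS⟩
    have : 0 < h ε := by
      rw [hfact ε hεS]
      exact mul_pos (hfact_pos ε hεS) (lt_of_le_of_ne (hg_nonneg ε) (Ne.symm hgε))
    exact ne_of_gt this
  have hh_pos : 0 < ∫ ε in S, h ε :=
    (setIntegral_pos_iff_support_of_nonneg_ae hh_nonneg hh_int).mpr
      (lt_of_lt_of_le hg_sup (measure_mono hsub))
  -- expand ∫ h
  have hexp : ∫ ε in S, h ε =
      2 * (∫ ε in S, g ε) - ((∫ ε in S, |ε| ^ (p * s) * g ε) +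
        (∫ ε in S, |ε| ^ (p - p * s - 1) * g ε) +
        (∫ ε in S, (1 - |ε| ^ (p - 1)) * g ε)) := by
    have h12 : IntegrableOn (fun ε => |ε| ^ (p * s) * g ε +
        |ε| ^ (p - p * s - 1) * g ε) S := hi1.add hi2
    have h123 : IntegrableOn (fun ε => |ε| ^ (p * s) * g ε +
        |ε| ^ (p - p * s - 1) * g ε + (1 - |ε| ^ (p - 1)) * g ε) S := h12.add hi3'
    rw [hh]
    rw [integral_sub (hg_int.const_mul 2) h123, integral_add h12 hi3',
      integral_add hi1 hi2, integral_const_mul]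
  rw [hg_one] at hexp
  linarith [hh_pos, hexp ▸ hh_pos]
end

section
/- The density f(x) = exp(x - e^x) on ℝ (the density of log Y where Y ~ Exp(1)) satisfies: for every ε with 0 < ε < 1, f(x)/f(xε) → 0 as x → +∞ and as x → -∞; and for every ε with -1 < ε < 0, f(x)/f(xε) → 0 as x → +∞ but f(x)/f(xε) → +∞ as x → -∞. -/
open Filter Real

/-- The density of `log Y` with `Y ~ Exp(1)`. -/
noncomputable def gumbelTypeDensity (x : ℝ) : ℝ := Real.exp (x - Real.exp x)

lemma aux_mul_exp (b : ℝ) (hb : b < 0) :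
    Tendsto (fun x : ℝ => x * Real.exp (b * x)) atTop (nhds 0) := by
  have h1 : Tendsto (fun x : ℝ => (-b) * x) atTop atTop :=
    (tendsto_const_mul_atTop_of_pos (by linarith)).2 tendsto_id
  have h2 := (Real.tendsto_pow_mul_exp_neg_atTop_nhds_zero 1).comp h1
  have h3 := h2.const_mul (1 / (-b))
  simp only [mul_zero] at h3
  refine h3.congr fun x => ?_
  simp only [Function.comp]
  rw [pow_one]
  have hb' : b ≠ 0 := hb.ne
  have : -b * x * rexp (-(-b * x)) = b * (x * rexp (b * x)) * (-1) := by
    rw [neg_mul, neg_neg]; ring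
  rw [this]
  field_simp

lemma aux_exp_to_zero (c : ℝ) (hc : c < 0) :
    Tendsto (fun x : ℝ => Real.exp (c * x)) atTop (nhds 0) := by
  exact Real.tendsto_exp_atBot.comp ((tendsto_const_mul_atBot_of_neg hc).2 tendsto_id)

lemma ratio_eq (ε x : ℝ) :
    gumbelTypeDensity x / gumbelTypeDensity (x * ε) =
      Real.exp ((x - Real.exp x) - (x * ε - Real.exp (x * ε))) := by
  rw [gumbelTypeDensity, gumbelTypeDensity, ← Real.exp_sub]

theorem stmt_15 :
    (∀ ε : ℝ, 0 < ε → ε < 1 →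
      Tendsto (fun x : ℝ => gumbelTypeDensity x / gumbelTypeDensity (x * ε))
        atTop (nhds 0) ∧
      Tendsto (fun x : ℝ => gumbelTypeDensity x / gumbelTypeDensity (x * ε))
        atBot (nhds 0)) ∧
    (∀ ε : ℝ, -1 < ε → ε < 0 →
      Tendsto (fun x : ℝ => gumbelTypeDensity x / gumbelTypeDensity (x * ε))
        atTop (nhds 0) ∧
      Tendsto (fun x : ℝ => gumbelTypeDensity x / gumbelTypeDensity (x * ε))
        atBot atTop) := by
  -- Common: atTop case for any ε < 1
  have hTop : ∀ ε : ℝ, ε < 1 →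
      Tendsto (fun x : ℝ => gumbelTypeDensity x / gumbelTypeDensity (x * ε))
        atTop (nhds 0) := by
    intro ε hε
    simp only [ratio_eq]
    apply Real.tendsto_exp_atBot.comp
    -- exponent = exp x * (x * exp(-x) - 1 - ε * (x * exp(-x)) + exp((ε-1)x)) → -∞
    have hb : Tendsto
        (fun x : ℝ => x * Real.exp ((-1) * x) - 1 - ε * (x * Real.exp ((-1) * x))
          + Real.exp ((ε - 1) * x)) atTop (nhds (-1 : ℝ)) := by
      have h1 := aux_mul_exp (-1) (by norm_num)
      have h2 := aux_exp_to_zero (ε - 1) (by linarith)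
      have := ((h1.sub (tendsto_const_nhds (x := (1:ℝ)))).sub (h1.const_mul ε)).add h2
      simpa using this
    have hmain := Real.tendsto_exp_atTop.atTop_mul_neg (by norm_num : (-1:ℝ) < 0) hb
    refine hmain.congr fun x => ?_
    have hx : Real.exp ((-1) * x) = (Real.exp x)⁻¹ := by
      rw [neg_one_mul, Real.exp_neg]
    have hx2 : Real.exp ((ε - 1) * x) = Real.exp (x * ε) * (Real.exp x)⁻¹ := by
      rw [← Real.exp_neg, ← Real.exp_add]; ring_nf
    rw [hx, hx2]
    have hpos := Real.exp_pos x
    field_simp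
    ring
  constructor
  · intro ε hε0 hε1
    refine ⟨hTop ε hε1, ?_⟩
    simp only [ratio_eq]
    apply Real.tendsto_exp_atBot.comp
    -- exponent = (1-ε)x + (exp(εx) - exp x) → -∞
    have h1 : Tendsto (fun x : ℝ => (1 - ε) * x) atBot atBot :=
      (tendsto_const_mul_atBot_of_pos (by linarith)).2 tendsto_id
    have h2 : Tendsto (fun x : ℝ => Real.exp (x * ε) - Real.exp x) atBot (nhds 0) := by
      have ha : Tendsto (fun x : ℝ => Real.exp (x * ε)) atBot (nhds 0) := by
        apply Real.tendsto_exp_atBot.comp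
        exact (tendsto_mul_const_atBot_of_pos hε0).2 tendsto_id
      have hb : Tendsto (fun x : ℝ => Real.exp x) atBot (nhds 0) :=
        Real.tendsto_exp_atBot
      simpa using ha.sub hb
    have := h2.add_atBot h1
    refine this.congr fun x => ?_
    ring
  · intro ε hεm1 hε0
    refine ⟨hTop ε (by linarith), ?_⟩
    simp only [ratio_eq]
    apply Real.tendsto_exp_atTop.comp
    -- exponent = exp(εx) * ((1-ε) * (x * exp(-εx)) - exp((1-ε)x) + 1) → +∞
    have hexp : Tendsto (fun x : ℝ => Real.exp (x * ε)) atBot atTop := by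
      apply Real.tendsto_exp_atTop.comp
      exact (tendsto_mul_const_atTop_of_neg hε0).2 tendsto_id
    have hbr : Tendsto
        (fun x : ℝ => (1 - ε) * (x * Real.exp ((-ε) * x)) - Real.exp ((1 - ε) * x) + 1)
        atBot (nhds 1) := by
      have h1 : Tendsto (fun x : ℝ => x * Real.exp ((-ε) * x)) atBot (nhds 0) := by
        have := (aux_mul_exp ε hε0).comp tendsto_neg_atBot_atTop
        have h' := this.neg
        simp only [Function.comp, neg_zero] at h' ⊢
        refine h'.congr fun x => ?_
        ring_nf
      have h2 : Tendsto (fun x : ℝ => Real.exp ((1 - ε) * x)) atBot (nhds 0) := by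
        apply Real.tendsto_exp_atBot.comp
        exact (tendsto_const_mul_atBot_of_pos (by linarith)).2 tendsto_id
      have := ((h1.const_mul (1 - ε)).sub h2).add (tendsto_const_nhds (x := (1:ℝ)))
      simpa using this
    have hmain := hexp.atTop_mul_pos (by norm_num : (0:ℝ) < 1) hbr
    refine hmain.congr fun x => ?_
    have hx : Real.exp ((-ε) * x) = (Real.exp (x * ε))⁻¹ := by
      rw [← Real.exp_neg]; ring_nf
    have hx2 : Real.exp ((1 - ε) * x) = Real.exp x * (Real.exp (x * ε))⁻¹ := by
      rw [← Real.exp_neg, ← Real.exp_add]; ring_nf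
    rw [hx, hx2]
    have hpos := Real.exp_pos (x * ε)
    field_simp
    ring
end
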